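/- Let F : ℝⁿ → ℝⁿ be continuous, let h : ℝⁿ → ℝ be continuously differentiable, define C := {x ∈ ℝⁿ : h(x) ≥ 0}, and let α : ℝ → ℝ be an extended class-K function that is locally Lipschitz. Suppose there is an open set D ⊇ C such that ⟨∇h(x), F(x)⟩ ≥ −α(h(x)) for all x ∈ D. Then every solution x(·) of ẋ = F(x) on [0,∞) with x(0) ∈ C satisfies x(t) ∈ C for all t ≥ 0 (C is forward invariant). -/

import Mathlib

open scoped RealInnerProductSpace

/-- An extended class-K function: continuous, strictly increasing, vanishing at `0`. -/
def IsClassKe (α : ℝ → ℝ) : Prop :=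
  Continuous α ∧ StrictMono α ∧ α 0 = 0

/-- Lemma 3 (control barrier function forward invariance, closed-loop form):
if `⟨∇h(x), F(x)⟩ ≥ -α(h(x))` on a neighborhood of `C = {h ≥ 0}`, then `C` is
forward invariant for `ẋ = F(x)`. -/
theorem cbf_forward_invariance {n : ℕ}
    (F : EuclideanSpace ℝ (Fin n) → EuclideanSpace ℝ (Fin n))
    (hF : Continuous F)
    (h : EuclideanSpace ℝ (Fin n) → ℝ) (hh : ContDiff ℝ 1 h)
    (α : ℝ → ℝ) (hα : IsClassKe α) (hαlip : LocallyLipschitz α)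
    (D : Set (EuclideanSpace ℝ (Fin n))) (hD : IsOpen D)
    (hCD : {x : EuclideanSpace ℝ (Fin n) | 0 ≤ h x} ⊆ D)
    (hbarrier : ∀ x ∈ D, ⟪gradient h x, F x⟫ ≥ -α (h x)) :
    ∀ x : ℝ → EuclideanSpace ℝ (Fin n),
      (∀ t : ℝ, 0 ≤ t → HasDerivAt x (F (x t)) t) →
      x 0 ∈ {y : EuclideanSpace ℝ (Fin n) | 0 ≤ h y} →
      ∀ t : ℝ, 0 ≤ t → x t ∈ {y : EuclideanSpace ℝ (Fin n) | 0 ≤ h y} := by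
  intro x hx hx0 t ht
  by_contra hcon
  simp only [Set.mem_setOf_eq, not_le] at hcon
  set y : ℝ → ℝ := fun s => h (x s) with hy
  have hy0 : 0 ≤ y 0 := hx0
  have hdiff : Differentiable ℝ h := hh.differentiable one_ne_zero
  have hderiv : ∀ s : ℝ, 0 ≤ s →
      HasDerivAt y (⟪gradient h (x s), F (x s)⟫) s := by
    intro s hs
    have hfd : HasFDerivAt h
        ((InnerProductSpace.toDual ℝ _) (gradient h (x s))) (x s) :=
      (hdiff (x s)).hasGradientAt.hasFDerivAt
    have := hfd.comp_hasDerivAt s (hx s hs)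
    rw [InnerProductSpace.toDual_apply_apply] at this
    exact this
  have hycont : ∀ s : ℝ, 0 ≤ s → ContinuousAt y s := fun s hs =>
    (hderiv s hs).continuousAt
  have hycontOn : ∀ a b : ℝ, 0 ≤ a → ContinuousOn y (Set.Icc a b) := by
    intro a b ha s hs
    exact (hycont s (ha.trans hs.1)).continuousWithinAt
  have ht0 : (0:ℝ) < t := by
    rcases lt_or_eq_of_le ht with h' | h'
    · exact h'
    · rw [← h'] at hcon; exact absurd hy0 (not_le.mpr hcon)
  -- the set of zeros of y in [0, t]
  set Z : Set ℝ := Set.Icc 0 t ∩ y ⁻¹' {0} with hZdef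
  have hZne : Z.Nonempty := by
    have := intermediate_value_Icc' (le_of_lt ht0) (hycontOn 0 t le_rfl)
    rcases this ⟨le_of_lt hcon, hy0⟩ with ⟨c, hc, hyc⟩
    exact ⟨c, hc, hyc⟩
  have hZclosed : IsClosed Z :=
    (hycontOn 0 t le_rfl).preimage_isClosed_of_isClosed isClosed_Icc isClosed_singleton
  have hZcomp : IsCompact Z :=
    isCompact_Icc.of_isClosed_subset hZclosed Set.inter_subset_left
  have hZbdd : BddAbove Z := ⟨t, fun u hu => hu.1.2⟩
  set σ : ℝ := sSup Z with hσdef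
  have hσZ : σ ∈ Z := hZcomp.sSup_mem hZne
  have hσ0 : 0 ≤ σ := hσZ.1.1
  have hσt : σ ≤ t := hσZ.1.2
  have hyσ : y σ = 0 := hσZ.2
  have hσlt : σ < t := lt_of_le_of_ne hσt (by
    intro he; rw [he] at hyσ; exact absurd hyσ (ne_of_lt hcon))
  -- y is negative on (σ, t]
  have hneg : ∀ s ∈ Set.Ioc σ t, y s < 0 := by
    intro s hs
    rcases lt_trichotomy (y s) 0 with h' | h' | h'
    · exact h'
    · exact absurd (le_csSup hZbdd (show s ∈ Z from ⟨⟨hσ0.trans hs.1.le, hs.2⟩, h'⟩)) (not_le.mpr hs.1)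
    · exfalso
      have hst : s ≤ t := hs.2
      have := intermediate_value_Icc' hst (hycontOn s t (hσ0.trans hs.1.le))
      rcases this ⟨le_of_lt hcon, le_of_lt h'⟩ with ⟨c, hc, hyc⟩
      have : c ≤ σ := le_csSup hZbdd (show c ∈ Z from ⟨⟨hσ0.trans (hs.1.le.trans hc.1), hc.2⟩, hyc⟩)
      exact absurd (hs.1.trans_le hc.1) (not_lt.mpr this)
  -- x σ ∈ D, so x stays in D on a small interval after σ
  have hxσD : x σ ∈ D := hCD (by simpa [Set.mem_setOf_eq] using hyσ.ge)
  have hnhds : x ⁻¹' D ∈ nhds σ :=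
    (hx σ hσ0).continuousAt.preimage_mem_nhds (hD.mem_nhds hxσD)
  rcases Metric.mem_nhds_iff.mp hnhds with ⟨ε, hε, hball⟩
  set s : ℝ := min (σ + ε / 2) t with hsdef
  have hσs : σ < s := lt_min (by linarith) hσlt
  have hst : s ≤ t := min_le_right _ _
  have hsD : ∀ u ∈ Set.Icc σ s, x u ∈ D := by
    intro u hu
    apply hball
    have h1 : u ≤ σ + ε / 2 := hu.2.trans (min_le_left _ _)
    simp only [Metric.mem_ball, Real.dist_eq]
    rw [abs_of_nonneg (by linarith [hu.1])]
    linarith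
  have hyle : ∀ u ∈ Set.Icc σ s, y u ≤ 0 := by
    intro u hu
    rcases eq_or_lt_of_le hu.1 with h' | h'
    · rw [← h', hyσ]
    · exact (hneg u ⟨h', hu.2.trans hst⟩).le
  -- y is monotone on [σ, s] since y' ≥ -α(y u) ≥ 0 there
  have hmono : MonotoneOn y (Set.Icc σ s) := by
    apply monotoneOn_of_deriv_nonneg (convex_Icc σ s) (hycontOn σ s hσ0)
    · intro u hu
      rw [interior_Icc] at hu
      exact (hderiv u (hσ0.trans hu.1.le)).differentiableAt.differentiableWithinAt
    · intro u hu
      rw [interior_Icc] at hu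
      have hu' : u ∈ Set.Icc σ s := ⟨hu.1.le, hu.2.le⟩
      rw [(hderiv u (hσ0.trans hu.1.le)).deriv]
      have h1 : -α (y u) ≤ ⟪gradient h (x u), F (x u)⟫ := hbarrier _ (hsD u hu')
      have h2 : α (y u) ≤ 0 := by
        have := hα.2.1.monotone (hyle u hu')
        rwa [hα.2.2] at this
      linarith
  have := hmono ⟨le_rfl, hσs.le⟩ ⟨hσs.le, le_rfl⟩ hσs.le
  rw [hyσ] at this
  exact absurd this (not_le.mpr (hneg s ⟨hσs, hst⟩))
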